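/- Let α, β > 0 and k a positive integer. Define F(x) = -∑_{j=0}^{k-1} [1/((k-j)(k-j-1+α+β))] (∏_{i=1}^{j} (k-i+α)/(k-i+α+β)) x^{k-j} + [∑_{j=0}^{k-1} 1/((k-j)(k-j-1+α+β))] ∏_{r=0}^{k-1} (α+r)/(α+β+r). Then x(1-x) F''(x) + (α(1-x) - βx) F'(x) = x^k - ∏_{r=0}^{k-1} (α+r)/(α+β+r) for all x ∈ [0,1]. -/

import Mathlib

open Finset


lemma aux_deriv (k : ℕ) (a : ℕ → ℝ) (n : ℕ → ℕ) (x : ℝ) :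
    HasDerivAt (fun x : ℝ => ∑ j ∈ range k, a j * x ^ n j)
      (∑ j ∈ range k, a j * (n j * x ^ (n j - 1))) x :=
  HasDerivAt.fun_sum fun j _ => (hasDerivAt_pow (n j) x).const_mul (a j)

lemma aux_prod (α β : ℝ) (k : ℕ) :
    (∏ i ∈ Finset.Icc 1 k, ((k : ℝ) - i + α) / ((k : ℝ) - i + α + β))
      = ∏ r ∈ Finset.range k, (α + r) / (α + β + r) := by
  rw [show Finset.Icc 1 k = Finset.Ico 1 k.succ by ext; simp, Finset.prod_Ico_eq_prod_range,
    ← Finset.prod_range_reflect]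
  apply Finset.prod_congr (by simp) ?_
  intro i hi
  simp only [Finset.mem_range, Nat.succ_sub_one] at hi ⊢
  have h2 : (1 + (k - 1 - i)) = k - i := by omega
  rw [h2, Nat.cast_sub (le_of_lt hi)]
  ring_nf

lemma aux_term (α β : ℝ) (hαβ : 0 < α + β) (m : ℕ) (hm : 1 ≤ m) (q x : ℝ) :
    x * (1 - x) * ((-((1 / ((m : ℝ) * ((m : ℝ) - 1 + α + β))) * q) * m * ((m - 1 : ℕ) : ℝ))
        * x ^ (m - 1 - 1))
      + (α * (1 - x) - β * x) * ((-((1 / ((m : ℝ) * ((m : ℝ) - 1 + α + β))) * q) * m)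
        * x ^ (m - 1))
    = q * x ^ m - (q * (((m : ℝ) - 1 + α) / ((m : ℝ) - 1 + α + β))) * x ^ (m - 1) := by
  match m, hm with
  | 1, _ =>
    norm_num
    field_simp
    ring
  | (n+2), _ =>
    have h1 : (n + 2 - 1 : ℕ) = n + 1 := rfl
    have h2 : (n + 2 - 1 - 1 : ℕ) = n := rfl
    rw [h2, h1]
    have hne1 : ((n : ℝ) + 2) ≠ 0 := by positivity
    have hne2 : ((n + 2 : ℕ) : ℝ) - 1 + α + β ≠ 0 := by
      push_cast
      have : (0:ℝ) ≤ n := Nat.cast_nonneg n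
      nlinarith
    push_cast at hne2 ⊢
    field_simp
    ring

/-- The explicit polynomial solves the Beta(α, β) Stein equation
`x(1-x) F''(x) + (α(1-x) - βx) F'(x) = x^k - E[Z^k]` on `[0,1]`. -/
theorem stmt_10 (α β : ℝ) (hα : 0 < α) (hβ : 0 < β) (k : ℕ) (hk : 0 < k)
    (F : ℝ → ℝ)
    (hF : ∀ x : ℝ, F x =
      -∑ j ∈ Finset.range k,
          (1 / (((k : ℝ) - j) * ((k : ℝ) - j - 1 + α + β)))
            * (∏ i ∈ Finset.Icc 1 j, ((k : ℝ) - i + α) / ((k : ℝ) - i + α + β))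
            * x ^ (k - j)
        + (∑ j ∈ Finset.range k, 1 / (((k : ℝ) - j) * ((k : ℝ) - j - 1 + α + β)))
            * ∏ r ∈ Finset.range k, (α + r) / (α + β + r)) :
    ∀ x ∈ Set.Icc (0 : ℝ) 1,
      x * (1 - x) * deriv (deriv F) x + (α * (1 - x) - β * x) * deriv F x
        = x ^ k - ∏ r ∈ Finset.range k, (α + r) / (α + β + r) := by
  set P : ℕ → ℝ := fun j => ∏ i ∈ Finset.Icc 1 j, ((k : ℝ) - i + α) / ((k : ℝ) - i + α + β)
    with hP
  set a : ℕ → ℝ := fun j =>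
    -((1 / (((k : ℝ) - j) * ((k : ℝ) - j - 1 + α + β))) * P j) with ha
  set C : ℝ := (∑ j ∈ Finset.range k, 1 / (((k : ℝ) - j) * ((k : ℝ) - j - 1 + α + β)))
      * ∏ r ∈ Finset.range k, (α + r) / (α + β + r) with hC
  -- rewrite F
  have hFeq : F = fun x => (∑ j ∈ range k, a j * x ^ (k - j)) + C := by
    funext x
    rw [hF x]
    congr 1
    rw [← Finset.sum_neg_distrib]
    exact Finset.sum_congr rfl fun j _ => by rw [ha]; ring
  -- first derivative
  have hd1 : deriv F = fun x => ∑ j ∈ range k, (a j * ((k - j : ℕ) : ℝ)) * x ^ (k - j - 1) := by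
    funext x
    rw [hFeq, ((aux_deriv k a (fun j => k - j) x).add_const C).deriv]
    exact Finset.sum_congr rfl fun j _ => by ring
  -- second derivative
  have hd2 : ∀ x : ℝ, deriv (deriv F) x
      = ∑ j ∈ range k, (a j * ((k - j : ℕ) : ℝ) * ((k - j - 1 : ℕ) : ℝ)) * x ^ (k - j - 1 - 1) := by
    intro x
    rw [hd1, (aux_deriv k (fun j => a j * ((k - j : ℕ) : ℝ)) (fun j => k - j - 1) x).deriv]
    exact Finset.sum_congr rfl fun j _ => by ring
  intro x hx
  rw [hd2 x, hd1]
  beta_reduce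
  rw [Finset.mul_sum, Finset.mul_sum, ← Finset.sum_add_distrib]
  have key : ∀ j ∈ range k,
      x * (1 - x) * ((a j * ((k - j : ℕ) : ℝ) * ((k - j - 1 : ℕ) : ℝ)) * x ^ (k - j - 1 - 1))
        + (α * (1 - x) - β * x) * ((a j * ((k - j : ℕ) : ℝ)) * x ^ (k - j - 1))
      = P j * x ^ (k - j) - P (j + 1) * x ^ (k - (j + 1)) := by
    intro j hj
    rw [Finset.mem_range] at hj
    have hm : 1 ≤ k - j := by omega
    have hc1 : ((k - j : ℕ) : ℝ) = (k : ℝ) - j := by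
      rw [Nat.cast_sub (le_of_lt hj)]
    have ha' : a j = -((1 / (((k - j : ℕ) : ℝ) * (((k - j : ℕ) : ℝ) - 1 + α + β))) * P j) := by
      rw [ha, hc1]
    have hPsucc : P (j + 1) = P j * ((((k - j : ℕ) : ℝ) - 1 + α) / (((k - j : ℕ) : ℝ) - 1 + α + β)) := by
      rw [hP]
      beta_reduce
      rw [Finset.prod_Icc_succ_top (Nat.le_add_left 1 j)]
      rw [hc1]
      push_cast
      congr 1
      rw [show (k:ℝ) - ((j:ℝ) + 1) = (k:ℝ) - (j:ℝ) - 1 by ring]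
    have hsub : k - (j + 1) = k - j - 1 := by omega
    rw [ha', hPsucc, hsub]
    exact aux_term α β (by linarith) (k - j) hm (P j) x
  rw [Finset.sum_congr rfl key, Finset.sum_range_sub' (fun j => P j * x ^ (k - j))]
  have hP0 : P 0 = 1 := by simp [hP]
  have hPk : P k = ∏ r ∈ Finset.range k, (α + r) / (α + β + r) := aux_prod α β k
  simp [hP0, hPk]
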